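/- Let n ≥ 1, let E = EuclideanSpace ℝ (Fin n), and let α and β be star partial homeomorphisms of E. Then α and β generate the same principal ideal under right multiplication — that is, there exist star partial homeomorphisms γ and δ with β ≈ α.trans γ and α ≈ β.trans δ — if and only if α.source = β.source. (This describes one of the two one-sided Green relations on the semigroup of star partial homeomorphisms: it is determined by equality of domains.) -/
import Mathlib

noncomputable def radial {n : ℕ} (L : Set (EuclideanSpace ℝ (Fin n)))
    (u : EuclideanSpace ℝ (Fin n)) : ℝ :=
  sSup {c : ℝ | 0 ≤ c ∧ c • u ∈ L}

def IsStar {n : ℕ} (L : Set (EuclideanSpace ℝ (Fin n))) : Prop :=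
  IsCompact L ∧ (0 : EuclideanSpace ℝ (Fin n)) ∈ interior L ∧
    (∀ x ∈ L, segment ℝ 0 x ⊆ L) ∧
    ContinuousOn (radial L) (Metric.sphere (0 : EuclideanSpace ℝ (Fin n)) 1)

def IsStarPartialHomeo {n : ℕ}
    (α : PartialEquiv (EuclideanSpace ℝ (Fin n)) (EuclideanSpace ℝ (Fin n))) : Prop :=
  IsStar α.source ∧ IsStar α.target ∧
    ContinuousOn α α.source ∧ ContinuousOn α.symm α.target ∧
    α 0 = 0 ∧ ∀ x ∈ α.source, α '' (segment ℝ 0 x) = segment ℝ 0 (α x)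

variable {n : ℕ}

lemma zero_mem_source {α : PartialEquiv (EuclideanSpace ℝ (Fin n)) (EuclideanSpace ℝ (Fin n))}
    (hα : IsStarPartialHomeo α) : (0 : EuclideanSpace ℝ (Fin n)) ∈ α.source :=
  interior_subset hα.1.2.1

lemma symm_zero {α : PartialEquiv (EuclideanSpace ℝ (Fin n)) (EuclideanSpace ℝ (Fin n))}
    (hα : IsStarPartialHomeo α) : α.symm 0 = 0 := by
  have h := α.left_inv (zero_mem_source hα)
  rw [hα.2.2.2.2.1] at h
  exact h

lemma symm_segment {α : PartialEquiv (EuclideanSpace ℝ (Fin n)) (EuclideanSpace ℝ (Fin n))}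
    (hα : IsStarPartialHomeo α) {y : EuclideanSpace ℝ (Fin n)} (hy : y ∈ α.target) :
    α.symm '' segment ℝ 0 y = segment ℝ 0 (α.symm y) := by
  have hx : α.symm y ∈ α.source := α.map_target hy
  have hseg : segment ℝ 0 (α.symm y) ⊆ α.source := hα.1.2.2.1 _ hx
  have him : α '' segment ℝ 0 (α.symm y) = segment ℝ 0 y := by
    rw [hα.2.2.2.2.2 _ hx, α.right_inv hy]
  rw [← him, ← Set.image_comp]
  have : Set.EqOn (α.symm ∘ α) id (segment ℝ 0 (α.symm y)) :=
    fun z hz => α.left_inv (hseg hz)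
  rw [Set.image_congr this, Set.image_id]

lemma trans_source_eq {α β : PartialEquiv (EuclideanSpace ℝ (Fin n)) (EuclideanSpace ℝ (Fin n))}
    (h : α.source = β.source) : (α.symm.trans β).source = α.target := by
  rw [PartialEquiv.trans_source, PartialEquiv.symm_source]
  refine Set.inter_eq_left.mpr fun y hy => ?_
  have : α.symm y ∈ α.source := α.map_target hy
  rw [h] at this
  exact this

lemma key {α β : PartialEquiv (EuclideanSpace ℝ (Fin n)) (EuclideanSpace ℝ (Fin n))}
    (hα : IsStarPartialHomeo α) (hβ : IsStarPartialHomeo β) (h : α.source = β.source) :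
    IsStarPartialHomeo (α.symm.trans β) ∧ β ≈ α.trans (α.symm.trans β) := by
  have hsrc : (α.symm.trans β).source = α.target := trans_source_eq h
  have htgt : (α.symm.trans β).target = β.target := by
    have : (α.symm.trans β).target = (β.symm.trans α.symm.symm).source := by
      rw [← PartialEquiv.trans_symm_eq_symm_trans_symm, PartialEquiv.symm_source]
    rw [this, α.symm_symm]
    exact trans_source_eq h.symm
  have hmaps : Set.MapsTo α.symm α.target β.source := fun y hy => h ▸ α.map_target hy
  constructor
  · refine ⟨hsrc ▸ hα.2.1, htgt ▸ hβ.2.1, ?_, ?_, ?_, ?_⟩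
    · rw [PartialEquiv.coe_trans, hsrc]
      exact hβ.2.2.1.comp hα.2.2.2.1 hmaps
    · rw [PartialEquiv.coe_trans_symm, PartialEquiv.symm_symm, htgt]
      exact hα.2.2.1.comp hβ.2.2.2.1 (fun y hy => h ▸ β.map_target hy)
    · show β (α.symm 0) = 0
      rw [symm_zero hα, hβ.2.2.2.2.1]
    · intro x hx
      rw [hsrc] at hx
      show (β ∘ α.symm) '' _ = segment ℝ 0 (β (α.symm x))
      rw [Set.image_comp, symm_segment hα hx, hβ.2.2.2.2.2 _ (hmaps hx)]
  · have hs : β.source = (α.trans (α.symm.trans β)).source := by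
      rw [PartialEquiv.trans_source, hsrc, ← h]
      exact (Set.inter_eq_left.mpr fun x hx => α.map_source hx).symm
    refine ⟨hs, fun x hx => ?_⟩
    show β x = β (α.symm (α x))
    rw [α.left_inv (h ▸ hx)]

theorem stmt_9 (n : ℕ) (hn : 1 ≤ n)
    (α β : PartialEquiv (EuclideanSpace ℝ (Fin n)) (EuclideanSpace ℝ (Fin n)))
    (hα : IsStarPartialHomeo α) (hβ : IsStarPartialHomeo β) :
    (∃ γ δ : PartialEquiv (EuclideanSpace ℝ (Fin n)) (EuclideanSpace ℝ (Fin n)),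
        IsStarPartialHomeo γ ∧ IsStarPartialHomeo δ ∧
        β ≈ α.trans γ ∧ α ≈ β.trans δ) ↔ α.source = β.source := by
  constructor
  · rintro ⟨γ, δ, -, -, h1, h2⟩
    apply Set.Subset.antisymm
    · have := h2.1
      rw [PartialEquiv.trans_source] at this
      exact this ▸ Set.inter_subset_left
    · have := h1.1
      rw [PartialEquiv.trans_source] at this
      exact this ▸ Set.inter_subset_left
  · intro h
    obtain ⟨hγ, hγe⟩ := key hα hβ h
    obtain ⟨hδ, hδe⟩ := key hβ hα h.symm
    exact ⟨_, _, hγ, hδ, hγe, hδe⟩
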